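/- Let β : ℂ → ℂ satisfy β(0) = 0, |β(z) − β(z')| ≤ C|z − z'| for all z, z' ∈ ℂ (Lipschitz with constant C > 0), and Re⟨β(z) − β(z'), z − z'⟩ ≥ c·|z − z'|² for all z, z' ∈ ℂ (strict monotonicity with constant c > 0). Then the Fitzpatrick function F_β(z₁, z₂) := sup_{u ∈ ℂ} Re(⟨z₁, β(u)⟩ + ⟨u, z₂⟩ − ⟨u, β(u)⟩) is finite and real-valued everywhere, and satisfies F_β(z₁, z₂) ≤ C²·|z₁|²/(2c) + |z₂|²/(2c) for all z₁, z₂ ∈ ℂ. -/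

import Mathlib

/-- The Fitzpatrick function of `β : ℂ → ℂ`, as an extended-real-valued function on
`ℂ × ℂ`: `F_β(z₁,z₂) = sup_u Re(⟨z₁, β u⟩ + ⟨u, z₂⟩ − ⟨u, β u⟩)`, with
`⟨z,w⟩ = conj z · w`. -/
noncomputable def fitzpatrick (β : ℂ → ℂ) (p : ℂ × ℂ) : EReal :=
  ⨆ u : ℂ, (((starRingEnd ℂ p.1 * β u + starRingEnd ℂ u * p.2
      - starRingEnd ℂ u * β u).re : ℝ) : EReal)

/-- Let `β : ℂ → ℂ` satisfy `β 0 = 0`, be `C`-Lipschitz (`C > 0`) and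
strictly monotone with constant `c > 0`. Then the Fitzpatrick function `F_β` is
finite (real-valued) everywhere and satisfies
`F_β(z₁, z₂) ≤ C²·|z₁|²/(2c) + |z₂|²/(2c)` for all `z₁, z₂`. -/
theorem stmt12 (β : ℂ → ℂ) (C c : ℝ) (hC : 0 < C) (hc : 0 < c)
    (h0 : β 0 = 0)
    (hLip : ∀ z z' : ℂ, ‖β z - β z'‖ ≤ C * ‖z - z'‖)
    (hmono : ∀ z z' : ℂ,
      (starRingEnd ℂ (β z - β z') * (z - z')).re ≥ c * ‖z - z'‖ ^ 2) :
    ∀ z₁ z₂ : ℂ, ∃ r : ℝ, fitzpatrick β (z₁, z₂) = (r : EReal)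
      ∧ r ≤ C ^ 2 * ‖z₁‖ ^ 2 / (2 * c) + ‖z₂‖ ^ 2 / (2 * c) := by
  intro z₁ z₂
  set B : ℝ := C ^ 2 * ‖z₁‖ ^ 2 / (2 * c) + ‖z₂‖ ^ 2 / (2 * c)
    with hB
  have key : ∀ u : ℂ,
      (starRingEnd ℂ z₁ * β u + starRingEnd ℂ u * z₂ - starRingEnd ℂ u * β u).re ≤ B := by
    intro u
    have hβ : ‖β u‖ ≤ C * ‖u‖ := by
      have := hLip u 0
      simpa [h0] using this
    have hm : (starRingEnd ℂ (β u) * u).re ≥ c * ‖u‖ ^ 2 := by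
      have := hmono u 0
      simpa [h0] using this
    have hswap : (starRingEnd ℂ u * β u).re = (starRingEnd ℂ (β u) * u).re := by
      rw [Complex.mul_re, Complex.mul_re]
      simp [Complex.conj_re, Complex.conj_im]
      ring
    have h1 : (starRingEnd ℂ z₁ * β u).re ≤ ‖z₁‖ * (C * ‖u‖) := by
      calc (starRingEnd ℂ z₁ * β u).re ≤ ‖starRingEnd ℂ z₁ * β u‖ :=
            Complex.re_le_norm _
        _ = ‖z₁‖ * ‖β u‖ := by
            rw [norm_mul, Complex.norm_conj]
        _ ≤ ‖z₁‖ * (C * ‖u‖) := by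
            exact mul_le_mul_of_nonneg_left hβ (norm_nonneg _)
    have h2 : (starRingEnd ℂ u * z₂).re ≤ ‖u‖ * ‖z₂‖ := by
      calc (starRingEnd ℂ u * z₂).re ≤ ‖starRingEnd ℂ u * z₂‖ :=
            Complex.re_le_norm _
        _ = ‖u‖ * ‖z₂‖ := by rw [norm_mul, Complex.norm_conj]
    have hre : (starRingEnd ℂ z₁ * β u + starRingEnd ℂ u * z₂ - starRingEnd ℂ u * β u).re
        = (starRingEnd ℂ z₁ * β u).re + (starRingEnd ℂ u * z₂).re
          - (starRingEnd ℂ u * β u).re := by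
      simp [Complex.add_re, Complex.sub_re]
    rw [hre, hswap, hB]
    set t := ‖u‖
    set a := ‖z₁‖
    set b := ‖z₂‖
    have ht : 0 ≤ t := norm_nonneg _
    have ha : 0 ≤ a := norm_nonneg _
    have hb : 0 ≤ b := norm_nonneg _
    have h2c : (0:ℝ) < 2 * c := by linarith
    have main : a * (C * t) + t * b - c * t ^ 2
        ≤ C ^ 2 * a ^ 2 / (2 * c) + b ^ 2 / (2 * c) := by
      rw [← add_div, le_div_iff₀ h2c]
      nlinarith [sq_nonneg (C * a - c * t), sq_nonneg (b - c * t)]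
    linarith [h1, h2, hm, main]
  have h0val : (starRingEnd ℂ z₁ * β (0 : ℂ) + starRingEnd ℂ (0 : ℂ) * z₂
      - starRingEnd ℂ (0 : ℂ) * β (0 : ℂ)).re = 0 := by simp [h0]
  have hle : fitzpatrick β (z₁, z₂) ≤ (B : EReal) := by
    refine iSup_le fun u => ?_
    exact_mod_cast key u
  have hge : (0 : EReal) ≤ fitzpatrick β (z₁, z₂) := by
    have := le_iSup (fun u : ℂ => (((starRingEnd ℂ z₁ * β u + starRingEnd ℂ u * z₂
        - starRingEnd ℂ u * β u).re : ℝ) : EReal)) (0 : ℂ)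
    rw [h0val] at this
    simpa [fitzpatrick] using this
  have hne_top : fitzpatrick β (z₁, z₂) ≠ ⊤ :=
    ne_top_of_le_ne_top (EReal.coe_ne_top B) hle
  have hne_bot : fitzpatrick β (z₁, z₂) ≠ ⊥ :=
    fun h => by simp [h] at hge
  refine ⟨(fitzpatrick β (z₁, z₂)).toReal, (EReal.coe_toReal hne_top hne_bot).symm, ?_⟩
  have := EReal.toReal_le_toReal hle (by simp [hne_bot]) (EReal.coe_ne_top B)
  simpa using this
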